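/- Let n ≥ 2 be a natural number, let 0 < r ≤ 1, and let X_1, …, X_n be independent random points, each uniformly distributed on the unit square [0,1]². For any subset A of {1,…,n} with 1 ≤ |A| ≤ n/2, let N be the number of ordered pairs (i,j) with i ∈ A, j ∉ A, and ‖X_i − X_j‖ ≤ r. Then (1/8) |A| n π r² ≤ E[N] ≤ |A| n π r². -/

import Mathlib

open MeasureTheory Real

section Aux
open intervalIntegral

-- quarter circle integral
lemma quarter_circle (r : ℝ) (hr0 : 0 < r) (hr1 : r ≤ 1) :
    ∫ t in (0:ℝ)..1, Real.sqrt (r^2 - t^2) = π * r^2 / 4 := by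
  have h01 : ∫ u in (0:ℝ)..1, Real.sqrt (1 - u^2) = π / 4 := by
    have heven : ∫ u in (-1:ℝ)..0, Real.sqrt (1 - u^2)
        = ∫ u in (0:ℝ)..1, Real.sqrt (1 - u^2) := by
      rw [show ∫ u in (-1:ℝ)..0, Real.sqrt (1 - u^2)
          = ∫ u in (-1:ℝ)..0, Real.sqrt (1 - (-u)^2) by
        apply integral_congr; intro x _; simp]
      rw [intervalIntegral.integral_comp_neg (fun u => Real.sqrt (1 - u^2))]
      norm_num
    have := integral_sqrt_one_sub_sq
    rw [← intervalIntegral.integral_add_adjacent_intervals (a := (-1:ℝ)) (b := 0) (c := 1)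
      (by apply Continuous.intervalIntegrable; continuity)
      (by apply Continuous.intervalIntegrable; continuity)] at this
    rw [heven] at this
    linarith
  have hsplit : ∫ t in (0:ℝ)..1, Real.sqrt (r^2 - t^2)
      = (∫ t in (0:ℝ)..r, Real.sqrt (r^2 - t^2)) + ∫ t in r..1, Real.sqrt (r^2 - t^2) := by
    rw [intervalIntegral.integral_add_adjacent_intervals
      (by apply Continuous.intervalIntegrable; continuity)
      (by apply Continuous.intervalIntegrable; continuity)]
  have hzero : ∫ t in r..1, Real.sqrt (r^2 - t^2) = 0 := by
    rw [show (0:ℝ) = ∫ t in r..1, (0:ℝ) by simp]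
    apply integral_congr
    intro x hx
    rw [Set.uIcc_of_le hr1] at hx
    exact Real.sqrt_eq_zero_of_nonpos (by nlinarith [hx.1, hx.2])
  have hscale : ∫ t in (0:ℝ)..r, Real.sqrt (r^2 - t^2) = π * r^2 / 4 := by
    have := intervalIntegral.smul_integral_comp_mul_left
      (f := fun t => Real.sqrt (r^2 - t^2)) (a := (0:ℝ)) (b := 1) (c := r)
    simp only [mul_zero, mul_one, smul_eq_mul] at this
    rw [← this]
    have : ∀ u : ℝ, Real.sqrt (r^2 - (r*u)^2) = r * Real.sqrt (1 - u^2) := by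
      intro u
      rw [show r^2 - (r*u)^2 = r^2 * (1 - u^2) by ring, Real.sqrt_mul (sq_nonneg r),
        Real.sqrt_sq hr0.le]
    simp_rw [this, intervalIntegral.integral_const_mul, h01]
    ring
  rw [hsplit, hzero, hscale]; ring

lemma quarter_lower (r c : ℝ) (hr0 : 0 < r) (hc0 : 0 ≤ c) (hc1 : c ≤ 1) :
    (∫ t in (0:ℝ)..1, Real.sqrt (r^2 - t^2))
      ≤ ∫ t in (0:ℝ)..1, Real.sqrt (r^2 - (t - c)^2) := by
  have cont : ∀ d : ℝ, Continuous fun t : ℝ => Real.sqrt (r^2 - (t - d)^2) := by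
    intro d; continuity
  have hsplit : ∫ t in (0:ℝ)..1, Real.sqrt (r^2 - (t - c)^2)
      = (∫ t in (0:ℝ)..c, Real.sqrt (r^2 - (t - c)^2))
        + ∫ t in c..1, Real.sqrt (r^2 - (t - c)^2) := by
    rw [intervalIntegral.integral_add_adjacent_intervals ((cont c).intervalIntegrable _ _)
      ((cont c).intervalIntegrable _ _)]
  have h1 : ∫ t in c..1, Real.sqrt (r^2 - (t - c)^2)
      = ∫ t in (0:ℝ)..(1-c), Real.sqrt (r^2 - t^2) := by
    have := intervalIntegral.integral_comp_sub_right
      (f := fun t => Real.sqrt (r^2 - t^2)) (a := c) (b := 1) c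
    rw [this]; norm_num
  have h2 : ∫ t in (0:ℝ)..c, Real.sqrt (r^2 - (t - c)^2)
      = ∫ t in (0:ℝ)..c, Real.sqrt (r^2 - t^2) := by
    have e : ∀ t : ℝ, Real.sqrt (r^2 - (t - c)^2) = Real.sqrt (r^2 - (c - t)^2) := by
      intro t; rw [show (t-c)^2 = (c-t)^2 by ring]
    simp_rw [e]
    have := intervalIntegral.integral_comp_sub_left
      (f := fun t => Real.sqrt (r^2 - t^2)) (a := (0:ℝ)) (b := c) (d := c)
    rw [this]; norm_num
  have h3 : (∫ t in (1-c)..1, Real.sqrt (r^2 - t^2))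
      ≤ ∫ t in (0:ℝ)..c, Real.sqrt (r^2 - t^2) := by
    have hshift : ∫ t in (1-c)..1, Real.sqrt (r^2 - t^2)
        = ∫ t in (0:ℝ)..c, Real.sqrt (r^2 - (t + (1-c))^2) := by
      have := intervalIntegral.integral_comp_add_right
        (f := fun t => Real.sqrt (r^2 - t^2)) (a := (0:ℝ)) (b := c) (1-c)
      rw [this]; norm_num
    rw [hshift]
    apply intervalIntegral.integral_mono_on hc0
      (Continuous.intervalIntegrable (by continuity) _ _)
      (Continuous.intervalIntegrable (by continuity) _ _)
    intro t ht
    apply Real.sqrt_le_sqrt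
    nlinarith [ht.1, ht.2]
  have h4 : (∫ t in (0:ℝ)..1, Real.sqrt (r^2 - t^2))
      = (∫ t in (0:ℝ)..(1-c), Real.sqrt (r^2 - t^2))
        + ∫ t in (1-c)..1, Real.sqrt (r^2 - t^2) := by
    rw [intervalIntegral.integral_add_adjacent_intervals
      (Continuous.intervalIntegrable (by continuity) _ _)
      (Continuous.intervalIntegrable (by continuity) _ _)]
  rw [hsplit, h1, h2, h4]
  linarith

noncomputable def ee : EuclideanSpace ℝ (Fin 2) ≃ᵐ ℝ × ℝ :=
  (MeasurableEquiv.toLp 2 (Fin 2 → ℝ)).symm.trans (MeasurableEquiv.finTwoArrow)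

-- pointwise area lower bound
lemma area_lower (r : ℝ) (hr0 : 0 < r) (hr1 : r ≤ 1) (x : EuclideanSpace ℝ (Fin 2))
    (hx : ∀ k, x k ∈ Set.Icc (0:ℝ) 1) :
    ENNReal.ofReal (π * r^2 / 4)
      ≤ volume (Metric.closedBall x r ∩ {p : EuclideanSpace ℝ (Fin 2) | ∀ k, p k ∈ Set.Icc (0:ℝ) 1}) := by
  set g : ℝ → ℝ := fun b => Real.sqrt (r^2 - (b - x 0)^2) with hg
  set f₁ : ℝ → ℝ := fun b => max (x 1 - g b) 0 with hf₁
  have hgcont : Continuous g := by continuity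
  have hg0 : ∀ b, 0 ≤ g b := fun b => Real.sqrt_nonneg _
  have hgr : ∀ b, g b ≤ r := by
    intro b
    rw [hg]
    calc Real.sqrt (r^2 - (b - x 0)^2) ≤ Real.sqrt (r^2) :=
          Real.sqrt_le_sqrt (by nlinarith [sq_nonneg (b - x 0)])
      _ = r := Real.sqrt_sq hr0.le
  set T : Set (ℝ × ℝ) := regionBetween f₁ (fun b => f₁ b + g b) (Set.Ioo 0 1) with hT
  -- T is inside the image of the ball∩square
  have hsub : ee ⁻¹' T ⊆ Metric.closedBall x r ∩ {p : EuclideanSpace ℝ (Fin 2) | ∀ k, p k ∈ Set.Icc (0:ℝ) 1} := by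
    intro y hy
    have hy0 : y 0 ∈ Set.Ioo (0:ℝ) 1 := hy.1
    have hy1 : y 1 ∈ Set.Ioo (f₁ (y 0)) (f₁ (y 0) + g (y 0)) := hy.2
    have hgpos : 0 < g (y 0) := by
      by_contra h
      push_neg at h
      have : f₁ (y 0) + g (y 0) ≤ f₁ (y 0) := by linarith
      exact absurd hy1.2 (by linarith [hy1.1])
    have hx1mem : x 1 ∈ Set.Icc (f₁ (y 0)) (f₁ (y 0) + g (y 0)) := by
      constructor
      · exact max_le (by linarith [hg0 (y 0)]) (by linarith [(hx 1).1, hg0 (y 0)] : (0:ℝ) ≤ x 1)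
      · rcases le_total (x 1 - g (y 0)) 0 with h | h
        · rw [hf₁]; simp only [max_eq_right h]; linarith
        · rw [hf₁]; simp only [max_eq_left h]; linarith
    have hdist1 : (y 1 - x 1)^2 ≤ (g (y 0))^2 := by
      have h1 := hy1.1; have h2 := hy1.2
      have h3 := hx1mem.1; have h4 := hx1mem.2
      nlinarith
    have hgsq : (g (y 0))^2 = r^2 - (y 0 - x 0)^2 := by
      rw [hg]
      exact Real.sq_sqrt (by nlinarith [Real.sqrt_nonneg (r^2 - (y 0 - x 0)^2), hgpos,
        (Real.sqrt_pos.mp (by rwa [hg] at hgpos))])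
    constructor
    · rw [Metric.mem_closedBall, dist_eq_norm, EuclideanSpace.norm_eq]
      rw [show Real.sqrt (∑ i, ‖(y - x) i‖^2) = Real.sqrt ((y 0 - x 0)^2 + (y 1 - x 1)^2) by
        simp [Fin.sum_univ_two, sq_abs]]
      rw [show r = Real.sqrt (r^2) from (Real.sqrt_sq hr0.le).symm]
      apply Real.sqrt_le_sqrt
      nlinarith
    · rw [Set.mem_setOf_eq, Fin.forall_fin_two]
      refine ⟨⟨hy0.1.le, hy0.2.le⟩, ?_, ?_⟩
      · have : (0:ℝ) ≤ f₁ (y 0) := le_max_right _ _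
        linarith [hy1.1]
      · have h2 := hy1.2
        have : f₁ (y 0) + g (y 0) ≤ 1 := by
          rcases le_total (x 1 - g (y 0)) 0 with h | h
          · rw [hf₁]; simp only [max_eq_right h]; linarith [hgr (y 0)]
          · rw [hf₁]; simp only [max_eq_left h]; linarith [(hx 1).2]
        linarith
  have hf₁cont : Continuous f₁ := (continuous_const.sub hgcont).max continuous_const
  have hTm : MeasurableSet T :=
    measurableSet_regionBetween hf₁cont.measurable
      (hf₁cont.add hgcont).measurable measurableSet_Ioo
  have hvolT : volume T = ENNReal.ofReal (∫ b in Set.Ioo (0:ℝ) 1, g b) := by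
    rw [hT, Measure.volume_eq_prod, volume_regionBetween_eq_integral (g := fun b => f₁ b + g b)
      (hf₁cont.integrableOn_Icc.mono_set Set.Ioo_subset_Icc_self)
      ((hf₁cont.add hgcont).integrableOn_Icc.mono_set Set.Ioo_subset_Icc_self)
      measurableSet_Ioo (fun b _ => by simp [hg0 b])]
    congr 1
    apply setIntegral_congr_fun measurableSet_Ioo
    intro b _
    simp
  have hintg : π * r^2 / 4 ≤ ∫ b in Set.Ioo (0:ℝ) 1, g b := by
    have h1 : ∫ b in Set.Ioo (0:ℝ) 1, g b = ∫ b in (0:ℝ)..1, g b := by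
      rw [intervalIntegral.integral_of_le zero_le_one, ← integral_Ioc_eq_integral_Ioo]
    rw [h1]
    have := quarter_lower r (x 0) hr0 (hx 0).1 (hx 0).2
    have hq := quarter_circle r hr0 hr1
    rw [hq] at this
    exact this
  calc ENNReal.ofReal (π * r^2 / 4) ≤ volume T := by
        rw [hvolT]; exact ENNReal.ofReal_le_ofReal hintg
    _ = volume (ee ⁻¹' T) :=
        (((volume_preserving_finTwoArrow ℝ).comp
          (EuclideanSpace.volume_preserving_symm_measurableEquiv_toLp (Fin 2))).measure_preimage
          hTm.nullMeasurableSet).symm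
    _ ≤ _ := measure_mono hsub



noncomputable abbrev Qsq : Set (EuclideanSpace ℝ (Fin 2)) :=
  {p : EuclideanSpace ℝ (Fin 2) | ∀ k, p k ∈ Set.Icc (0 : ℝ) 1}

lemma Qsq_meas : MeasurableSet Qsq := by
  have : Qsq = ⋂ k : Fin 2, (fun p : EuclideanSpace ℝ (Fin 2) => p k) ⁻¹' Set.Icc (0:ℝ) 1 := by
    ext p; simp [Set.mem_iInter]
  rw [this]
  exact MeasurableSet.iInter fun k => ((measurable_pi_apply k).comp (WithLp.measurable_ofLp 2 (Fin 2 → ℝ))) measurableSet_Icc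

lemma Qsq_vol : volume Qsq = 1 := by
  have h : Qsq = (MeasurableEquiv.toLp 2 (Fin 2 → ℝ)).symm ⁻¹' (Set.univ.pi fun _ => Set.Icc (0:ℝ) 1) := by
    ext p; rw [Set.mem_preimage, Set.mem_univ_pi]; exact Iff.rfl
  rw [h, (EuclideanSpace.volume_preserving_symm_measurableEquiv_toLp (Fin 2)).measure_preimage
    ((MeasurableSet.univ_pi fun _ => measurableSet_Icc).nullMeasurableSet), volume_pi_pi]
  simp

lemma Sset_meas (r : ℝ) :
    MeasurableSet {p : EuclideanSpace ℝ (Fin 2) × EuclideanSpace ℝ (Fin 2) | ‖p.1 - p.2‖ ≤ r} := by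
  apply measurableSet_le
  · exact (continuous_fst.sub continuous_snd).norm.measurable
  · exact measurable_const

lemma prob_bounds (r : ℝ) (hr0 : 0 < r) (hr1 : r ≤ 1) :
    ENNReal.ofReal (π * r^2/4) ≤
      ((volume.restrict Qsq).prod (volume.restrict Qsq)) {p : _ × _ | ‖p.1 - p.2‖ ≤ r} ∧
    ((volume.restrict Qsq).prod (volume.restrict Qsq)) {p : _ × _ | ‖p.1 - p.2‖ ≤ r}
      ≤ ENNReal.ofReal (π * r^2) := by
  set ν := volume.restrict Qsq with hν
  have hνuniv : ν Set.univ = 1 := by rw [hν, Measure.restrict_apply_univ, Qsq_vol]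
  have hprod : (ν.prod ν) {p : _ × _ | ‖p.1 - p.2‖ ≤ r}
      = ∫⁻ x, ν (Metric.closedBall x r) ∂ν := by
    rw [Measure.prod_apply (Sset_meas r)]
    congr 1
    ext x
    congr 1
    ext y
    simp [Metric.mem_closedBall, dist_eq_norm, norm_sub_rev]
  have hball : ∀ x : EuclideanSpace ℝ (Fin 2),
      volume (Metric.closedBall x r) = ENNReal.ofReal (π * r^2) := by
    intro x
    rw [EuclideanSpace.volume_closedBall]
    have hcard : (Fintype.card (Fin 2)) = 2 := by simp
    rw [hcard]
    rw [show ((2:ℕ):ℝ)/2 + 1 = 2 by norm_num, Real.Gamma_two]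
    rw [Real.sq_sqrt pi_nonneg]
    rw [← ENNReal.ofReal_pow hr0.le, ← ENNReal.ofReal_mul (by positivity)]
    congr 1
    ring
  constructor
  · rw [hprod]
    calc ENNReal.ofReal (π * r^2/4)
        = ∫⁻ _, ENNReal.ofReal (π * r^2/4) ∂ν := by rw [lintegral_const, hνuniv, mul_one]
      _ ≤ ∫⁻ x, ν (Metric.closedBall x r) ∂ν := by
          apply lintegral_mono_ae
          rw [hν]
          filter_upwards [(ae_restrict_iff' Qsq_meas).2 (Filter.Eventually.of_forall
            (fun x hx => area_lower r hr0 hr1 x hx))] with x hx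
          rw [Measure.restrict_apply' Qsq_meas]
          exact hx
  · rw [hprod]
    calc (∫⁻ x, ν (Metric.closedBall x r) ∂ν)
        ≤ ∫⁻ x, ENNReal.ofReal (π * r^2) ∂ν := by
          apply lintegral_mono
          intro x
          rw [← hball x]
          exact le_trans (Measure.restrict_apply_le _ _) (le_refl _)
      _ = ENNReal.ofReal (π * r^2) := by rw [lintegral_const, hνuniv, mul_one]

end Aux

/-- Expected number of connecting edges after a fully random move: if `X 1, …, X n` are
independent uniform points on the unit square and `A` is a set of nodes with
`1 ≤ |A| ≤ n/2`, then the expected number `E[N]` of ordered pairs `(i, j)` with `i ∈ A`,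
`j ∉ A` and `‖X i − X j‖ ≤ r` satisfies `(1/8)|A| n π r² ≤ E[N] ≤ |A| n π r²`. -/
theorem fully_random_expected_cut_edges {Ω : Type*} [MeasurableSpace Ω]
    (μ : Measure Ω) [IsProbabilityMeasure μ] (n : ℕ) (hn : 2 ≤ n)
    (r : ℝ) (hr0 : 0 < r) (hr1 : r ≤ 1)
    (X : Fin n → Ω → EuclideanSpace ℝ (Fin 2)) (hX : ∀ i, Measurable (X i))
    (hindep : ProbabilityTheory.iIndepFun X μ)
    (hunif : ∀ i, Measure.map (X i) μ =
      volume.restrict {p : EuclideanSpace ℝ (Fin 2) | ∀ k, p k ∈ Set.Icc (0 : ℝ) 1})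
    (A : Finset (Fin n)) (hA1 : 1 ≤ A.card) (hA2 : (A.card : ℝ) ≤ n / 2) :
    (1 / 8) * A.card * n * π * r ^ 2 ≤
        (∫ ω, ∑ i ∈ A, ∑ j ∈ Aᶜ, (if ‖X i ω - X j ω‖ ≤ r then (1 : ℝ) else 0) ∂μ) ∧
      (∫ ω, ∑ i ∈ A, ∑ j ∈ Aᶜ, (if ‖X i ω - X j ω‖ ≤ r then (1 : ℝ) else 0) ∂μ) ≤
        A.card * n * π * r ^ 2 := by
  set ν := volume.restrict Qsq with hν
  set S : Set (EuclideanSpace ℝ (Fin 2) × EuclideanSpace ℝ (Fin 2)) :=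
    {p | ‖p.1 - p.2‖ ≤ r} with hS
  set c : ℝ := ((ν.prod ν) S).toReal with hc
  -- bounds on c
  obtain ⟨hlow, hup⟩ := prob_bounds r hr0 hr1
  have hfin : (ν.prod ν) S ≠ ⊤ := (lt_of_le_of_lt hup ENNReal.ofReal_lt_top).ne
  have hcup : c ≤ π * r^2 := by
    rw [hc]
    calc ((ν.prod ν) S).toReal ≤ (ENNReal.ofReal (π * r^2)).toReal :=
          ENNReal.toReal_mono ENNReal.ofReal_ne_top hup
      _ = π * r^2 := ENNReal.toReal_ofReal (by positivity)
  have hclow : π * r^2/4 ≤ c := by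
    rw [hc]
    calc π * r^2/4 = (ENNReal.ofReal (π * r^2/4)).toReal :=
          (ENNReal.toReal_ofReal (by positivity)).symm
      _ ≤ ((ν.prod ν) S).toReal := ENNReal.toReal_mono hfin hlow
  -- each term of the sum
  have hmeas : ∀ i j : Fin n,
      Measurable fun ω => (if ‖X i ω - X j ω‖ ≤ r then (1:ℝ) else 0) := by
    intro i j
    have hpm : Measurable fun ω => (X i ω, X j ω) := (hX i).prodMk (hX j)
    exact Measurable.ite (hpm (Sset_meas r)) measurable_const measurable_const
  have hint : ∀ i j : Fin n,
      Integrable (fun ω => (if ‖X i ω - X j ω‖ ≤ r then (1:ℝ) else 0)) μ := by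
    intro i j
    apply Integrable.mono' (integrable_const (1:ℝ)) (hmeas i j).aestronglyMeasurable
    filter_upwards with ω
    split <;> simp
  have hval : ∀ i j : Fin n, i ≠ j →
      (∫ ω, (if ‖X i ω - X j ω‖ ≤ r then (1:ℝ) else 0) ∂μ) = c := by
    intro i j hij
    have hpm : Measurable fun ω => (X i ω, X j ω) := (hX i).prodMk (hX j)
    have hmap : Measure.map (fun ω => (X i ω, X j ω)) μ = ν.prod ν := by
      rw [(ProbabilityTheory.indepFun_iff_map_prod_eq_prod_map_map
        (hX i).aemeasurable (hX j).aemeasurable).mp (hindep.indepFun hij),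
        hunif i, hunif j]
    have hB : MeasurableSet ((fun ω => (X i ω, X j ω)) ⁻¹' S) := hpm (Sset_meas r)
    have heq : (fun ω => (if ‖X i ω - X j ω‖ ≤ r then (1:ℝ) else 0))
        = Set.indicator ((fun ω => (X i ω, X j ω)) ⁻¹' S) (fun _ => (1:ℝ)) := by
      classical
      ext ω
      by_cases h : ‖X i ω - X j ω‖ ≤ r <;>
        simp [Set.indicator_apply, hS, Set.mem_preimage, Set.mem_setOf_eq, h]
    rw [heq, integral_indicator_const (1:ℝ) hB, smul_eq_mul, mul_one, measureReal_def,
      ← Measure.map_apply hpm (Sset_meas r), hmap]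
  -- total
  have htotal : (∫ ω, ∑ i ∈ A, ∑ j ∈ Aᶜ, (if ‖X i ω - X j ω‖ ≤ r then (1:ℝ) else 0) ∂μ)
      = (A.card : ℝ) * (Aᶜ.card : ℝ) * c := by
    rw [integral_finset_sum _ (fun i _ => integrable_finset_sum _ (fun j _ => hint i j))]
    have : ∀ i ∈ A, (∫ ω, ∑ j ∈ Aᶜ, (if ‖X i ω - X j ω‖ ≤ r then (1:ℝ) else 0) ∂μ)
        = (Aᶜ.card : ℝ) * c := by
      intro i hi
      rw [integral_finset_sum _ (fun j _ => hint i j)]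
      rw [Finset.sum_congr rfl (fun j hj => hval i j
        (fun h => (Finset.mem_compl.mp hj) (h ▸ hi)))]
      rw [Finset.sum_const, nsmul_eq_mul]
    rw [Finset.sum_congr rfl this, Finset.sum_const, nsmul_eq_mul]
    ring
  have hcard : (Aᶜ.card : ℝ) = (n : ℝ) - A.card := by
    rw [Finset.card_compl, Fintype.card_fin]
    have : A.card ≤ n := by
      calc A.card ≤ Fintype.card (Fin n) := A.card_le_univ
        _ = n := Fintype.card_fin n
    push_cast [Nat.cast_sub this]
    ring
  rw [htotal, hcard]
  have ha1 : (1:ℝ) ≤ (A.card : ℝ) := by exact_mod_cast hA1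
  have hn2 : (2:ℝ) ≤ (n:ℝ) := by exact_mod_cast hn
  have hm1 : (n:ℝ)/2 ≤ (n:ℝ) - A.card := by linarith
  have hc0 : 0 ≤ c := le_trans (by positivity) hclow
  constructor
  · calc (1/8) * (A.card:ℝ) * n * π * r^2
        = (A.card:ℝ) * ((n:ℝ)/2) * (π * r^2/4) := by ring
      _ ≤ (A.card:ℝ) * ((n:ℝ) - A.card) * c := by
          apply mul_le_mul
          · apply mul_le_mul_of_nonneg_left hm1 (by linarith)
          · exact hclow
          · positivity
          · exact mul_nonneg (by positivity) (by linarith)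
      _ = _ := rfl
  · calc (A.card:ℝ) * ((n:ℝ) - A.card) * c
        ≤ (A.card:ℝ) * (n:ℝ) * (π * r^2) := by
          apply mul_le_mul
          · apply mul_le_mul_of_nonneg_left (by linarith) (by linarith)
          · exact hcup
          · exact hc0
          · positivity
      _ = (A.card:ℝ) * n * π * r^2 := by ring
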